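/- Let a be a real number and z a nonzero real number. If C : ℝ → ℝ is differentiable, C(0) = −1, and C(x) = z·e^x·(a·C(x) + C′(x)) for all real x, then C(x) = −exp(1/z − a·x − (1/z)·e^{−x}) for all real x. -/

import Mathlib

theorem stmt_9 (a z : ℝ) (hz : z ≠ 0) (C : ℝ → ℝ) (hC : Differentiable ℝ C) (h0 : C 0 = -1)
    (hode : ∀ x : ℝ, C x = z * Real.exp x * (a * C x + deriv C x)) :
    ∀ x : ℝ, C x = -Real.exp (1 / z - a * x - (1 / z) * Real.exp (-x)) := by
  set F : ℝ → ℝ := fun x => 1 / z - a * x - (1 / z) * Real.exp (-x) with hFdef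
  have hF' : ∀ x : ℝ, HasDerivAt F (-a + (1 / z) * Real.exp (-x)) x := by
    intro x
    have h1 : HasDerivAt (fun x : ℝ => a * x) a x := by
      simpa using (hasDerivAt_id x).const_mul a
    have h2 : HasDerivAt (fun x : ℝ => Real.exp (-x)) (-Real.exp (-x)) x := by
      simpa using (hasDerivAt_id x).neg.exp
    have h3 : HasDerivAt (fun x : ℝ => (1 / z) * Real.exp (-x)) ((1 / z) * -Real.exp (-x)) x :=
      h2.const_mul (1 / z)
    have := ((hasDerivAt_const x (1 / z)).sub h1).sub h3
    refine this.congr_deriv ?_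
    ring
  have hder : ∀ x : ℝ, deriv C x = C x * (-a + (1 / z) * Real.exp (-x)) := by
    intro x
    have h := hode x
    have hne : z * Real.exp x ≠ 0 := mul_ne_zero hz (Real.exp_ne_zero x)
    have hex : Real.exp x ≠ 0 := Real.exp_ne_zero x
    rw [Real.exp_neg]
    field_simp
    nlinarith [h, sq_nonneg (Real.exp x)]
  have hg : ∀ x : ℝ, HasDerivAt (fun x => C x * Real.exp (-F x)) 0 x := by
    intro x
    have hCx : HasDerivAt C (deriv C x) x := (hC x).hasDerivAt
    have hE : HasDerivAt (fun x => Real.exp (-F x))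
        (Real.exp (-F x) * -(-a + (1 / z) * Real.exp (-x))) x := by
      simpa [mul_comm] using ((hF' x).neg).exp
    have := hCx.mul hE
    refine this.congr_deriv ?_
    rw [hder x]
    ring
  have hconst : ∀ x : ℝ, C x * Real.exp (-F x) = -1 := by
    intro x
    have hd : Differentiable ℝ (fun x => C x * Real.exp (-F x)) :=
      fun x => (hg x).differentiableAt
    have hz0 : ∀ y : ℝ, deriv (fun x => C x * Real.exp (-F x)) y = 0 :=
      fun y => (hg y).deriv
    have := is_const_of_deriv_eq_zero hd hz0 x 0
    rw [this, h0]
    have hF0 : F 0 = 0 := by simp [hFdef, div_mul_eq_mul_div, mul_comm]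
    rw [hF0]
    simp
  intro x
  have h := hconst x
  rw [Real.exp_neg] at h
  have hne : Real.exp (F x) ≠ 0 := Real.exp_ne_zero _
  field_simp at h
  linarith [h]
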